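/- Let R ⊆ ℕ be infinite and let σ : R → [0,1] be a weight on R such that for some constant b > 0 one has liminf_{N→∞} σ(R(N))/log N > b. Let (X_r)_{r∈R} be independent {0,1}-valued random variables on a probability space (Ω,P) with P(X_r = 1) = σ(r). Then almost surely sup_{N≥2} max_{β∈ℝ} |Σ_{r∈R(N)} (X_r − σ(r)) e(rβ)| / √((log N)·σ(R(N))) < ∞. -/

import Mathlib

open MeasureTheory Filter Topology
open scoped BigOperators

noncomputable section

open Classical in
/-- `S(N) = S ∩ {1,…,N}` as a `Finset`. -/
def initSeg (S : Set ℕ) (N : ℕ) : Finset ℕ := (Finset.Icc 1 N).filter (· ∈ S)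

/-- The average `(1/#S(N)) ∑_{s ∈ S(N)} f (sα mod 1)`. -/
def empAvg (S : Set ℕ) (α : ℝ) (N : ℕ) (f : UnitAddCircle → ℝ) : ℝ :=
  ((initSeg S N).card : ℝ)⁻¹ * ∑ s ∈ initSeg S N, f (((s : ℝ) * α : ℝ) : UnitAddCircle)

/-- `μ` is the weak limit of the empirical measures `(1/#S(N)) ∑_{s ∈ S(N)} δ_{sα mod 1}`. -/
def IsLimitMeasure (S : Set ℕ) (α : ℝ) (μ : Measure UnitAddCircle) : Prop :=
  ∀ f : C(UnitAddCircle, ℝ),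
    Tendsto (fun N => empAvg S α N (fun x => f x)) atTop (𝓝 (∫ x, f x ∂μ))

/-- A good set: infinite, and for every `α` the empirical measures converge weakly
to some (probability) limit measure `μ_{S,α}`. -/
def IsGoodSet (S : Set ℕ) : Prop :=
  S.Infinite ∧ ∀ α : ℝ, ∃ μ : Measure UnitAddCircle, IsProbabilityMeasure μ ∧ IsLimitMeasure S α μ

/-- `R` is sublacunary: `log N / #R(N) → 0`. -/
def Sublacunary (R : Set ℕ) : Prop :=
  Tendsto (fun N : ℕ => Real.log N / ((initSeg R N).card : ℝ)) atTop (𝓝 0)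

open Classical in
/-- `#{n < N : r_n ∈ S}` where `(r_n)` is the increasing (0-indexed) enumeration of `R`. -/
def relCount (R S : Set ℕ) (N : ℕ) : ℕ :=
  ((Finset.range N).filter (fun n => Nat.nth (· ∈ R) n ∈ S)).card

/-- Weighted average `(1/∑_{n<N} w n) ∑_{n<N} w n · f (r_n β mod 1)`. -/
def wAvg (R : Set ℕ) (w : ℕ → ℝ) (β : ℝ) (N : ℕ) (f : UnitAddCircle → ℝ) : ℝ :=
  (∑ n ∈ Finset.range N, w n)⁻¹ *
    ∑ n ∈ Finset.range N, w n * f (((Nat.nth (· ∈ R) n : ℝ) * β : ℝ) : UnitAddCircle)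

/-- `μ` is the weak limit of the `w`-weighted empirical measures along `R` at `β`. -/
def IsWeightLimit (R : Set ℕ) (w : ℕ → ℝ) (β : ℝ) (μ : Measure UnitAddCircle) : Prop :=
  ∀ f : C(UnitAddCircle, ℝ),
    Tendsto (fun N => wAvg R w β N (fun x => f x)) atTop (𝓝 (∫ x, f x ∂μ))

/-- A good weight on `R` (indexed by the increasing enumeration of `R`). -/
def IsGoodWeight (R : Set ℕ) (w : ℕ → ℝ) : Prop :=
  (∀ n, 0 ≤ w n) ∧ ¬ Summable w ∧
    ∀ β : ℝ, ∃ μ : Measure UnitAddCircle, IsProbabilityMeasure μ ∧ IsWeightLimit R w β μ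

/-- Besicovitch-type seminorm `‖f‖₁ = limsup_N (1/N) ∑_{n<N} |f n|`. -/
def besic (f : ℕ → ℝ) : ℝ := Filter.limsup (fun N => (∑ n ∈ Finset.range N, |f n|) / N) atTop

/-- An integrable weight: approximable in `‖·‖₁` by bounded good weights. -/
def IntegrableWeight (R : Set ℕ) (w : ℕ → ℝ) : Prop :=
  ∀ ε > 0, ∃ v : ℕ → ℝ, IsGoodWeight R v ∧ (∃ C, ∀ n, v n ≤ C) ∧
    besic (fun n => v n - w n) < ε

/-- Total variation distance between two finite Borel measures on the torus. -/
def varDist (μ ν : Measure UnitAddCircle) : ℝ :=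
  ⨆ B : Set UnitAddCircle, ⨆ _ : MeasurableSet B, |(μ B).toReal - (ν B).toReal|

/-- `e(θ) = exp(2πiθ)`. -/
def eC (θ : ℝ) : ℂ := Complex.exp (2 * Real.pi * Complex.I * θ)

/-- `w(R(N)) = ∑_{r ∈ R(N)} w r`. -/
def wSum (R : Set ℕ) (w : ℕ → ℝ) (N : ℕ) : ℝ := ∑ r ∈ initSeg R N, w r

/-- `μ` is the weak limit of `(1/w(R(N))) ∑_{r ∈ R(N)} w r · δ_{rβ mod 1}`. -/
def IsWeightLimitR (R : Set ℕ) (w : ℕ → ℝ) (β : ℝ) (μ : Measure UnitAddCircle) : Prop :=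
  ∀ f : C(UnitAddCircle, ℝ),
    Tendsto
      (fun N => (wSum R w N)⁻¹ * ∑ r ∈ initSeg R N, w r * f (((r : ℝ) * β : ℝ) : UnitAddCircle))
      atTop (𝓝 (∫ x, f x ∂μ))

/-- `f : ℕ → ℂ` has mean `c`. -/
def HasMean (f : ℕ → ℂ) (c : ℂ) : Prop :=
  Tendsto (fun N => (∑ n ∈ Finset.range N, f n) / (N : ℂ)) atTop (𝓝 c)

/-- The seminorm `‖f‖_M = limsup_N |(1/N) ∑_{n<N} f n|`. -/
def meanSeminorm (f : ℕ → ℂ) : ℝ :=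
  Filter.limsup (fun N => ‖(∑ n ∈ Finset.range N, f n) / (N : ℂ)‖) atTop

end


open MeasureTheory Filter Real ProbabilityTheory
open scoped ENNReal NNReal BigOperators
set_option maxHeartbeats 1600000

section Helpers

lemma exp_taylor2 {u : ℝ} (hu : |u| ≤ 1) : Real.exp u - 1 - u ≤ u ^ 2 := by
  have h := Real.exp_bound hu (n := 2) (by norm_num)
  have h2 : ∑ m ∈ Finset.range 2, u ^ m / m.factorial = 1 + u := by
    simp [Finset.sum_range_succ]
  rw [h2] at h
  have h4 : |Real.exp u - (1+u)| ≤ |u| ^ 2 * (3/4) := by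
    convert h using 2
    norm_num [Nat.factorial]
  have := (abs_le.1 h4).2
  nlinarith [sq_abs u, sq_nonneg u]

/-- single bernoulli mgf bound -/
lemma mgf_single' {Ω : Type*} [MeasurableSpace Ω] (P : Measure Ω) [IsProbabilityMeasure P]
    (X : Ω → ℝ) (hm : Measurable X) (h01 : ∀ ω, X ω = 0 ∨ X ω = 1)
    {σ : ℝ} (hσ0 : 0 ≤ σ) (hσ1 : σ ≤ 1) (hd : P {ω | X ω = 1} = ENNReal.ofReal σ)
    {u : ℝ} (hu : |u| ≤ 1) :
    ∫ ω, Real.exp (u * (X ω - σ)) ∂P ≤ Real.exp (σ * u ^ 2) := by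
  have hXint : Integrable X P := by
    refine Integrable.mono' (integrable_const 1) hm.aestronglyMeasurable ?_
    filter_upwards with ω
    rcases h01 ω with h | h <;> simp [h]
  have hEX : ∫ ω, X ω ∂P = σ := by
    have hind : X = Set.indicator {ω | X ω = 1} (fun _ => (1:ℝ)) := by
      funext ω
      rcases h01 ω with h | h <;> simp [h, Set.indicator_apply]
    rw [hind, integral_indicator_const]
    · simp [measureReal_def, hd, ENNReal.toReal_ofReal hσ0]
    · exact hm (measurableSet_singleton 1)
  have hpt : ∀ ω, Real.exp (u * (X ω - σ)) =
      Real.exp (-(u*σ)) * (1 + (Real.exp u - 1) * X ω) := by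
    intro ω
    rcases h01 ω with h | h
    · simp [h]
    · rw [h]
      rw [show u * (1 - σ) = u + -(u*σ) by ring, Real.exp_add]
      ring
  calc ∫ ω, Real.exp (u * (X ω - σ)) ∂P
      = Real.exp (-(u*σ)) * (1 + (Real.exp u - 1) * σ) := by
        simp_rw [hpt]
        rw [integral_const_mul]
        congr 1
        rw [integral_add (integrable_const 1) (hXint.const_mul _), integral_const_mul, hEX]
        simp
    _ ≤ Real.exp (-(u*σ)) * Real.exp (σ * (Real.exp u - 1)) := by
        gcongr
        have := Real.add_one_le_exp (σ * (Real.exp u - 1))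
        linarith [this]
    _ ≤ Real.exp (σ * u ^ 2) := by
        rw [← Real.exp_add]
        apply Real.exp_le_exp.2
        have h1 : Real.exp u - 1 - u ≤ u ^ 2 := exp_taylor2 hu
        nlinarith [hσ0]


lemma bernstein_tail' {Ω : Type*} [MeasurableSpace Ω] (P : Measure Ω) [IsProbabilityMeasure P]
    (R : Set ℕ) (σ : ℕ → ℝ) (X : ℕ → Ω → ℝ)
    (hσ0 : ∀ r ∈ R, 0 ≤ σ r) (hσ1 : ∀ r ∈ R, σ r ≤ 1)
    (hXmeas : ∀ r, Measurable (X r))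
    (hX01 : ∀ r ∈ R, ∀ ω, X r ω = 0 ∨ X r ω = 1)
    (hindep : ProbabilityTheory.iIndepFun
      (fun r : ↥R => X (r : ℕ)) P)
    (hdist : ∀ r ∈ R, P {ω | X r ω = 1} = ENNReal.ofReal (σ r))
    (I : Finset ℕ) (hIR : ∀ r ∈ I, r ∈ R) (a : ℕ → ℝ) (ha : ∀ r, |a r| ≤ 1)
    (l t : ℝ) (hl0 : 0 ≤ l) (hl1 : l ≤ 1) :
    P {ω | t ≤ ∑ r ∈ I, a r * (X r ω - σ r)} ≤
      ENNReal.ofReal (Real.exp (l ^ 2 * (∑ r ∈ I, σ r) - l * t)) := by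
  classical
  set Y : ↥R → Ω → ℝ := fun r ω => a (r : ℕ) * (X (r : ℕ) ω - σ (r : ℕ)) with hY
  have hYindep : ProbabilityTheory.iIndepFun Y P := by
    have := hindep.comp (fun r : ↥R => fun x : ℝ => a (r : ℕ) * (x - σ (r : ℕ)))
      (fun r => by measurability)
    exact this
  have hYmeas : ∀ r : ↥R, Measurable (Y r) := fun r =>
    ((hXmeas r).sub measurable_const).const_mul _
  set emb : {x // x ∈ I} ↪ ↥R :=
    ⟨fun x => ⟨x.1, hIR x.1 x.2⟩, by intro x y h; simp only [Subtype.mk.injEq] at h; exact Subtype.ext h⟩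
    with hemb
  set s : Finset ↥R := I.attach.map emb with hs
  set S : Ω → ℝ := fun ω => ∑ r ∈ I, a r * (X r ω - σ r) with hS
  have hsum : (∑ i ∈ s, Y i) = S := by
    funext ω
    rw [Finset.sum_apply, hs, Finset.sum_map]
    simp only [hemb, Function.Embedding.coeFn_mk, hY]
    exact Finset.sum_attach I (fun r => a r * (X r ω - σ r))
  have hSmeas : Measurable S := by
    apply Finset.measurable_sum
    intro r _
    exact ((hXmeas r).sub measurable_const).const_mul _
  have hint : Integrable (fun ω => Real.exp (l * S ω)) P := by
    refine Integrable.mono' (integrable_const (Real.exp (I.card : ℝ))) ?_ ?_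
    · exact (hSmeas.const_mul l).exp.aestronglyMeasurable
    · filter_upwards with ω
      rw [Real.norm_eq_abs, Real.abs_exp, Real.exp_le_exp]
      have hb : |S ω| ≤ (I.card : ℝ) := by
        calc |S ω| ≤ ∑ r ∈ I, |a r * (X r ω - σ r)| := Finset.abs_sum_le_sum_abs _ _
          _ ≤ ∑ r ∈ I, 1 := by
              apply Finset.sum_le_sum
              intro r hr
              rw [abs_mul]
              have h1 : |X r ω - σ r| ≤ 1 := by
                rcases hX01 r (hIR r hr) ω with h | h <;>
                  [skip; skip] <;> rw [h, abs_le] <;>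
                  constructor <;> nlinarith [hσ0 r (hIR r hr), hσ1 r (hIR r hr)]
              calc |a r| * |X r ω - σ r| ≤ 1 * 1 := by
                    apply mul_le_mul (ha r) h1 (abs_nonneg _) zero_le_one
                _ = 1 := by ring
          _ = (I.card : ℝ) := by simp
      calc l * S ω ≤ |l * S ω| := le_abs_self _
        _ = |l| * |S ω| := abs_mul _ _
        _ ≤ 1 * (I.card : ℝ) := by
            apply mul_le_mul (by rwa [abs_of_nonneg hl0]) hb (abs_nonneg _) zero_le_one
        _ = (I.card : ℝ) := one_mul _
  have chern := measure_ge_le_exp_mul_mgf (X := S) (μ := P) (t := l) t hl0 hint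
  have hmgf : mgf S P l ≤ Real.exp (l ^ 2 * (∑ r ∈ I, σ r)) := by
    rw [← hsum, hYindep.mgf_sum hYmeas s]
    calc ∏ i ∈ s, mgf (Y i) P l ≤ ∏ i ∈ s, Real.exp (σ (i : ℕ) * l ^ 2) := by
          apply Finset.prod_le_prod (fun i _ => mgf_nonneg)
          intro i _
          have hri : (i : ℕ) ∈ R := i.2
          have hu : |l * a (i : ℕ)| ≤ 1 := by
            rw [abs_mul]
            calc |l| * |a (i:ℕ)| ≤ 1 * 1 :=
                  mul_le_mul (by rwa [abs_of_nonneg hl0]) (ha _) (abs_nonneg _) zero_le_one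
              _ = 1 := one_mul 1
          have key := mgf_single' P (X i) (hXmeas i) (hX01 i hri) (hσ0 i hri) (hσ1 i hri)
            (hdist i hri) hu
          have heq : mgf (Y i) P l = ∫ ω, Real.exp ((l * a (i:ℕ)) * (X (i:ℕ) ω - σ (i:ℕ))) ∂P := by
            unfold mgf
            congr 1
            funext ω
            simp only [hY]
            ring_nf
          rw [heq]
          refine key.trans ?_
          apply Real.exp_le_exp.2
          have ha2 : a (i:ℕ) ^ 2 ≤ 1 := by
            nlinarith [sq_abs (a (i:ℕ)), ha (i:ℕ), abs_nonneg (a (i:ℕ))]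
          have : (l * a (i:ℕ)) ^ 2 ≤ l ^ 2 := by
            rw [mul_pow]
            nlinarith [sq_nonneg l]
          nlinarith [hσ0 i hri]
      _ = Real.exp (∑ i ∈ s, σ (i : ℕ) * l ^ 2) := by rw [Real.exp_sum]
      _ = Real.exp (l ^ 2 * (∑ r ∈ I, σ r)) := by
          congr 1
          rw [hs, Finset.sum_map]
          simp only [hemb, Function.Embedding.coeFn_mk]
          exact (Finset.sum_attach I (fun r => σ r * l ^ 2)).trans (by rw [← Finset.sum_mul]; ring)
  have hfin : P {ω | t ≤ S ω} ≠ ⊤ := measure_ne_top _ _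
  rw [ENNReal.le_ofReal_iff_toReal_le hfin (Real.exp_pos _).le]
  calc (P {ω | t ≤ S ω}).toReal ≤ Real.exp (-l * t) * mgf S P l := chern
    _ ≤ Real.exp (-l * t) * Real.exp (l ^ 2 * (∑ r ∈ I, σ r)) := by
        gcongr
    _ = Real.exp (l ^ 2 * (∑ r ∈ I, σ r) - l * t) := by
        rw [← Real.exp_add]; ring_nf


lemma eC_eq (x : ℝ) : eC x = Complex.exp (((2 * Real.pi * x : ℝ) : ℂ) * Complex.I) := by
  unfold eC; push_cast; ring_nf

lemma eC_norm' (x : ℝ) : ‖eC x‖ = 1 := by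
  rw [eC_eq]; exact Complex.norm_exp_ofReal_mul_I _

lemma eC_add (x y : ℝ) : eC (x + y) = eC x * eC y := by
  unfold eC; rw [← Complex.exp_add]; push_cast; ring_nf

lemma eC_int (k : ℤ) : eC (k : ℝ) = 1 := by
  unfold eC
  rw [show 2 * (Real.pi : ℂ) * Complex.I * ((k : ℝ) : ℂ) = (k : ℂ) * (2 * Real.pi * Complex.I) by
    push_cast; ring]
  exact Complex.exp_int_mul_two_pi_mul_I k

lemma eC_re' (x : ℝ) : (eC x).re = Real.cos (2 * Real.pi * x) := by
  rw [eC_eq]; exact Complex.exp_ofReal_mul_I_re _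

lemma eC_im' (x : ℝ) : (eC x).im = Real.sin (2 * Real.pi * x) := by
  rw [eC_eq]; exact Complex.exp_ofReal_mul_I_im _

lemma eC_sub_one (δ : ℝ) (h : |2 * Real.pi * δ| ≤ 1) : ‖eC δ - 1‖ ≤ 2 * (2 * Real.pi * |δ|) := by
  rw [eC_eq]
  have habs : ‖((2 * Real.pi * δ : ℝ) : ℂ) * Complex.I‖ = |2 * Real.pi * δ| := by
    rw [norm_mul, Complex.norm_I, Complex.norm_real, Real.norm_eq_abs, mul_one]
  have := Complex.norm_exp_sub_one_le (x := ((2 * Real.pi * δ : ℝ) : ℂ) * Complex.I)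
    (by rw [habs]; exact h)
  rw [habs] at this
  refine this.trans (le_of_eq ?_)
  rw [abs_mul, abs_of_pos (by positivity : (0:ℝ) < 2 * Real.pi)]

/-- the λ-choice inequality -/
lemma lam_ineq' {b L V : ℝ} (hb : 0 < b) (hL : 0 < L) (hV : b * L ≤ V) :
    (min 1 (Real.sqrt (L / V))) ^ 2 * V -
      (min 1 (Real.sqrt (L / V))) * ((1 + 6 / min 1 b) * Real.sqrt (L * V)) ≤ -6 * L := by
  have hV0 : 0 < V := lt_of_lt_of_le (by positivity) hV
  have hm : 0 < min 1 b := lt_min one_pos hb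
  have hm1 : min 1 b ≤ 1 := min_le_left _ _
  have hc : 6 ≤ 6 / min 1 b := by
    rw [le_div_iff₀ hm]; nlinarith
  rcases le_or_gt (Real.sqrt (L / V)) 1 with hcase | hcase
  · have hmin : min 1 (Real.sqrt (L / V)) = Real.sqrt (L / V) := min_eq_right hcase
    rw [hmin]
    have h1 : Real.sqrt (L / V) ^ 2 = L / V := Real.sq_sqrt (by positivity)
    have h2 : Real.sqrt (L / V) * Real.sqrt (L * V) = L := by
      rw [← Real.sqrt_mul (by positivity)]
      rw [show L / V * (L * V) = L ^ 2 by field_simp]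
      exact Real.sqrt_sq hL.le
    rw [h1]
    rw [show Real.sqrt (L/V) * ((1 + 6 / min 1 b) * Real.sqrt (L*V))
        = (1 + 6 / min 1 b) * (Real.sqrt (L/V) * Real.sqrt (L*V)) by ring, h2]
    rw [div_mul_cancel₀ _ hV0.ne']
    nlinarith
  · have hmin : min 1 (Real.sqrt (L / V)) = 1 := min_eq_left hcase.le
    rw [hmin]
    have hVL : V ≤ L := by
      by_contra hcon
      push_neg at hcon
      have : Real.sqrt (L / V) ≤ 1 := by
        rw [show (1:ℝ) = Real.sqrt 1 by simp]
        apply Real.sqrt_le_sqrt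
        rw [div_le_one hV0]; linarith
      linarith
    have hsq : V ≤ Real.sqrt (L * V) := by
      rw [show Real.sqrt (L * V) = Real.sqrt L * Real.sqrt V by
        rw [← Real.sqrt_mul hL.le]]
      nth_rewrite 1 [show V = Real.sqrt V * Real.sqrt V by rw [Real.mul_self_sqrt hV0.le]]
      have h1 : Real.sqrt V ≤ Real.sqrt L := Real.sqrt_le_sqrt hVL
      nlinarith [Real.sqrt_nonneg V]
    have hbL : min 1 b * L ≤ V := le_trans (by nlinarith [min_le_right (1:ℝ) b, hL]) hV
    have h6 : 6 * L ≤ (6 / min 1 b) * V := by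
      rw [div_mul_eq_mul_div, le_div_iff₀ hm]; nlinarith
    nlinarith [Real.sqrt_nonneg (L * V)]

lemma net_approx' (N : ℕ) (hN : 1 ≤ N) (β : ℝ) :
    ∃ j : ℕ, j < 7 * N ^ 2 ∧ ∀ r : ℕ, 1 ≤ r → r ≤ N →
      ‖eC ((r : ℝ) * β) - eC ((r : ℝ) * ((j : ℝ) / ((7 * N ^ 2 : ℕ) : ℝ)))‖ ≤
        4 * Real.pi * r / ((7 * N ^ 2 : ℕ) : ℝ) := by
  set M : ℕ := 7 * N ^ 2 with hMdef
  have hM : 0 < M := by positivity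
  have hMR : (0:ℝ) < (M:ℝ) := by exact_mod_cast hM
  set f := Int.fract β with hf
  have hf0 : 0 ≤ f := Int.fract_nonneg β
  have hf1 : f < 1 := Int.fract_lt_one β
  have hMf0 : (0:ℝ) ≤ (M:ℝ) * f := by positivity
  set jz : ℤ := ⌊(M:ℝ) * f⌋ with hjz
  have hjz0 : 0 ≤ jz := Int.floor_nonneg.2 hMf0
  set j : ℕ := jz.toNat with hjn
  have hjR : (j:ℝ) = (jz:ℝ) := by rw [hjn]; exact_mod_cast Int.toNat_of_nonneg hjz0
  have hj_le : (j:ℝ) ≤ (M:ℝ) * f := by rw [hjR]; exact Int.floor_le _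
  have hj_lt : (M:ℝ) * f < (j:ℝ) + 1 := by rw [hjR]; exact Int.lt_floor_add_one _
  have hjM : j < M := by
    have : (j:ℝ) < (M:ℝ) := lt_of_le_of_lt hj_le (by nlinarith)
    exact_mod_cast this
  refine ⟨j, hjM, ?_⟩
  intro r hr1 hrN
  have hrR : (1:ℝ) ≤ (r:ℝ) := by exact_mod_cast hr1
  have hrNR : (r:ℝ) ≤ (N:ℝ) := by exact_mod_cast hrN
  set δ := f - (j:ℝ) / (M:ℝ) with hδ
  have hδ0 : 0 ≤ δ := by
    rw [hδ, sub_nonneg, div_le_iff₀ hMR]; nlinarith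
  have hδ1 : δ ≤ 1 / (M:ℝ) := by
    rw [hδ, sub_le_iff_le_add, ← add_div, le_div_iff₀ hMR]; nlinarith
  -- reduce β to its fractional part
  have h1 : (r:ℝ) * β = (r:ℝ) * f + (((r : ℤ) * ⌊β⌋ : ℤ) : ℝ) := by
    rw [hf, Int.fract]; push_cast; ring
  have h2 : (r:ℝ) * f = (r:ℝ) * ((j:ℝ) / (M:ℝ)) + (r:ℝ) * δ := by rw [hδ]; ring
  have hrδ0 : 0 ≤ (r:ℝ) * δ := by positivity
  have hNM : (N:ℝ) / (M:ℝ) ≤ 1 / 7 := by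
    rw [div_le_div_iff₀ hMR (by norm_num)]
    have : ((M:ℕ):ℝ) = 7 * (N:ℝ)^2 := by rw [hMdef]; push_cast; ring
    nlinarith
  have hrδ1 : (r:ℝ) * δ ≤ 1 / 7 := by
    calc (r:ℝ) * δ ≤ (N:ℝ) * (1 / (M:ℝ)) := by
          apply mul_le_mul hrNR hδ1 hδ0 (by positivity)
      _ = (N:ℝ) / (M:ℝ) := by ring
      _ ≤ 1 / 7 := hNM
  have habs : |2 * Real.pi * ((r:ℝ) * δ)| ≤ 1 := by
    rw [abs_of_nonneg (by positivity)]
    have h' : 2 * Real.pi * ((r:ℝ) * δ) ≤ 2 * Real.pi * (1/7) := by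
      gcongr
    calc 2 * Real.pi * ((r:ℝ) * δ) ≤ 2 * Real.pi * (1/7) := h'
      _ ≤ 1 := by nlinarith [Real.pi_lt_d2]
  calc ‖eC ((r:ℝ) * β) - eC ((r:ℝ) * ((j:ℝ) / (M:ℝ)))‖
      = ‖eC ((r:ℝ) * ((j:ℝ)/(M:ℝ))) * (eC ((r:ℝ) * δ) - 1)‖ := by
        rw [h1, eC_add, eC_int, mul_one, h2, eC_add]
        congr 1
        ring
    _ = ‖eC ((r:ℝ) * δ) - 1‖ := by rw [norm_mul, eC_norm', one_mul]
    _ ≤ 2 * (2 * Real.pi * |(r:ℝ) * δ|) := eC_sub_one _ habs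
    _ ≤ 4 * Real.pi * r / (M:ℝ) := by
        rw [abs_of_nonneg hrδ0]
        have hstep : (r:ℝ) * δ ≤ (r:ℝ) * (1/(M:ℝ)) :=
          mul_le_mul_of_nonneg_left hδ1 (by positivity)
        calc 2 * (2 * Real.pi * ((r:ℝ) * δ)) = 4 * Real.pi * ((r:ℝ) * δ) := by ring
          _ ≤ 4 * Real.pi * ((r:ℝ) * (1/(M:ℝ))) :=
              mul_le_mul_of_nonneg_left hstep (by positivity)
          _ = 4 * Real.pi * r / (M:ℝ) := by ring


end Helpers

/-- random selection lemma. If `σ : R → [0,1]` satisfies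
`liminf_N σ(R(N))/log N > b > 0` and `(X_r)_{r∈R}` are independent Bernoulli variables with
`P(X_r = 1) = σ(r)`, then almost surely the normalized exponential sums
`max_β |∑_{r∈R(N)} (X_r − σ(r)) e(rβ)| / √(log N · σ(R(N)))` are bounded over `N ≥ 2`. -/
theorem random_selection (R : Set ℕ) (hR : R.Infinite) (σ : ℕ → ℝ)
    (hσ0 : ∀ r ∈ R, 0 ≤ σ r) (hσ1 : ∀ r ∈ R, σ r ≤ 1)
    (b : ℝ) (hb : 0 < b)
    (hliminf : (b : EReal) <
      Filter.liminf (fun N : ℕ => (((wSum R σ N / Real.log N : ℝ)) : EReal)) atTop)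
    {Ω : Type*} [MeasurableSpace Ω] (P : MeasureTheory.Measure Ω)
    [MeasureTheory.IsProbabilityMeasure P]
    (X : ℕ → Ω → ℝ) (hXmeas : ∀ r, Measurable (X r))
    (hX01 : ∀ r ∈ R, ∀ ω, X r ω = 0 ∨ X r ω = 1)
    (hindep : ProbabilityTheory.iIndepFun
      (fun r : ↥R => X (r : ℕ)) P)
    (hdist : ∀ r ∈ R, P {ω | X r ω = 1} = ENNReal.ofReal (σ r)) :
    ∀ᵐ ω ∂P, ∃ C : ℝ, ∀ N ≥ 2, ∀ β : ℝ,
      ‖∑ r ∈ initSeg R N, ((X r ω - σ r : ℝ) : ℂ) * eC ((r : ℝ) * β)‖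
        ≤ C * Real.sqrt (Real.log N * wSum R σ N) := by 
  classical
  -- notation
  set L : ℕ → ℝ := fun N => Real.log N with hLdef
  set V : ℕ → ℝ := fun N => wSum R σ N with hVdef
  set c : ℝ := 1 + 6 / min 1 b with hcdef
  have hmb : 0 < min 1 b := lt_min one_pos hb
  have hc1 : 1 ≤ c := by
    have h6 : 0 < 6 / min 1 b := by positivity
    rw [hcdef]
    linarith
  -- membership facts
  have hmem : ∀ N, ∀ r ∈ initSeg R N, 1 ≤ r ∧ r ≤ N ∧ r ∈ R := by
    intro N r hr
    rw [initSeg, Finset.mem_filter, Finset.mem_Icc] at hr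
    exact ⟨hr.1.1, hr.1.2, hr.2⟩
  have hcard : ∀ N, ((initSeg R N).card : ℝ) ≤ (N : ℝ) := by
    intro N
    have : (initSeg R N).card ≤ (Finset.Icc 1 N).card :=
      Finset.card_le_card (Finset.filter_subset _ _)
    rw [Nat.card_Icc] at this
    exact_mod_cast le_trans this (by omega)
  have hV0 : ∀ N, 0 ≤ V N := fun N =>
    Finset.sum_nonneg fun r hr => hσ0 r (hmem N r hr).2.2
  -- the threshold N₀
  have hev : ∀ᶠ N : ℕ in atTop, (b : EReal) < ((wSum R σ N / Real.log N : ℝ) : EReal) :=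
    Filter.eventually_lt_of_lt_liminf hliminf
  obtain ⟨N₁, hN₁⟩ := Filter.eventually_atTop.1 hev
  set N₀ : ℕ := max N₁ 3 with hN₀def
  have hN₀facts : ∀ N, N₀ ≤ N → 1 ≤ L N ∧ b * L N ≤ V N := by
    intro N hN
    have hN3 : (3:ℕ) ≤ N := le_trans (le_max_right _ _) hN
    have hN3R : (3:ℝ) ≤ (N:ℝ) := by exact_mod_cast hN3
    have hL1 : 1 ≤ L N := by
      rw [hLdef]
      have h3 : Real.exp 1 ≤ 3 := by
        have := Real.exp_one_lt_d9
        linarith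
      have : Real.exp 1 ≤ (N:ℝ) := le_trans h3 hN3R
      calc (1:ℝ) = Real.log (Real.exp 1) := by rw [Real.log_exp]
        _ ≤ Real.log N := Real.log_le_log (Real.exp_pos 1) this
    have hLpos : 0 < L N := lt_of_lt_of_le one_pos hL1
    have hb' : b < wSum R σ N / Real.log N := by
      have := hN₁ N (le_trans (le_max_left _ _) hN)
      exact_mod_cast this
    have : b * L N < V N := by
      rw [hVdef, hLdef]
      calc b * Real.log N < (wSum R σ N / Real.log N) * Real.log N := by
            apply mul_lt_mul_of_pos_right hb' hLpos
        _ = wSum R σ N := by exact div_mul_cancel₀ _ hLpos.ne'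
    exact ⟨hL1, this.le⟩
  -- tail sets
  set t : ℕ → ℝ := fun N => c * Real.sqrt (L N * V N) with htdef
  set Tail : (ℕ → ℝ) → ℕ → Set Ω :=
    fun a N => {ω | t N ≤ ∑ r ∈ initSeg R N, a r * (X r ω - σ r)} with hTaildef
  set aC : ℕ → ℕ → ℕ → ℝ :=
    fun N j r => Real.cos (2 * Real.pi * ((r:ℝ) * ((j:ℝ) / ((7 * N ^ 2 : ℕ) : ℝ)))) with haC
  set aS : ℕ → ℕ → ℕ → ℝ :=
    fun N j r => Real.sin (2 * Real.pi * ((r:ℝ) * ((j:ℝ) / ((7 * N ^ 2 : ℕ) : ℝ)))) with haS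
  set Bad : ℕ → Set Ω := fun N =>
    ⋃ j ∈ Finset.range (7 * N ^ 2),
      (Tail (aC N j) N ∪ Tail (fun r => -(aC N j r)) N) ∪
      (Tail (aS N j) N ∪ Tail (fun r => -(aS N j r)) N) with hBaddef
  -- measure bound for N ≥ N₀
  have hBadMeas : ∀ N, N₀ ≤ N → P (Bad N) ≤ ENNReal.ofReal (28 / (N:ℝ)^4) := by
    intro N hN
    obtain ⟨hL1, hbLV⟩ := hN₀facts N hN
    have hLpos : 0 < L N := lt_of_lt_of_le one_pos hL1
    have hN3 : (3:ℕ) ≤ N := le_trans (le_max_right _ _) hN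
    have hNR : (0:ℝ) < (N:ℝ) := by exact_mod_cast (by omega : 0 < N)
    set l : ℝ := min 1 (Real.sqrt (L N / V N)) with hldef
    have hl0 : 0 ≤ l := le_min zero_le_one (Real.sqrt_nonneg _)
    have hl1 : l ≤ 1 := min_le_left _ _
    have hexp : Real.exp (l ^ 2 * V N - l * t N) ≤ ((N:ℝ)^6)⁻¹ := by
      have hkey := lam_ineq' hb hLpos hbLV
      have h1 : Real.exp (l ^ 2 * V N - l * t N) ≤ Real.exp (-6 * L N) := by
        apply Real.exp_le_exp.2
        calc l ^ 2 * V N - l * t N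
            = l ^ 2 * V N - l * ((1 + 6 / min 1 b) * Real.sqrt (L N * V N)) := by
              rw [htdef, hcdef]
          _ ≤ -6 * L N := hkey
      refine h1.trans ?_
      rw [show (-6 : ℝ) * L N = -(((6:ℕ):ℝ) * L N) by push_cast; ring, Real.exp_neg,
        Real.exp_nat_mul, hLdef, Real.exp_log hNR]
    have htail : ∀ (a : ℕ → ℝ), (∀ r, |a r| ≤ 1) →
        P (Tail a N) ≤ ENNReal.ofReal (((N:ℝ)^6)⁻¹) := by
      intro a ha
      have hB := bernstein_tail' P R σ X hσ0 hσ1 hXmeas hX01 hindep hdist (initSeg R N)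
        (fun r hr => (hmem N r hr).2.2) a ha l (t N) hl0 hl1
      have hVs : (∑ r ∈ initSeg R N, σ r) = V N := rfl
      rw [hVs] at hB
      exact le_trans hB (ENNReal.ofReal_le_ofReal hexp)
    have habsC : ∀ j r, |aC N j r| ≤ 1 := fun j r => Real.abs_cos_le_one _
    have habsS : ∀ j r, |aS N j r| ≤ 1 := fun j r => Real.abs_sin_le_one _
    set q : ℝ≥0∞ := ENNReal.ofReal (((N:ℝ)^6)⁻¹) with hq
    calc P (Bad N)
        ≤ ∑ j ∈ Finset.range (7 * N ^ 2),
            P ((Tail (aC N j) N ∪ Tail (fun r => -(aC N j r)) N) ∪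
               (Tail (aS N j) N ∪ Tail (fun r => -(aS N j r)) N)) :=
          measure_biUnion_finset_le _ _
      _ ≤ ∑ _j ∈ Finset.range (7 * N ^ 2), (q + q + (q + q)) := by
          apply Finset.sum_le_sum
          intro j _
          refine le_trans (measure_union_le _ _) (add_le_add
            (le_trans (measure_union_le _ _) (add_le_add ?_ ?_))
            (le_trans (measure_union_le _ _) (add_le_add ?_ ?_)))
          · exact htail _ (habsC j)
          · exact htail _ (fun r => by rw [abs_neg]; exact habsC j r)
          · exact htail _ (habsS j)
          · exact htail _ (fun r => by rw [abs_neg]; exact habsS j r)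
      _ = ((7 * N ^ 2 : ℕ) : ℝ≥0∞) * (q + q + (q + q)) := by
          rw [Finset.sum_const, Finset.card_range, nsmul_eq_mul]
      _ ≤ ENNReal.ofReal (28 / (N:ℝ)^4) := by
          have h4 : q + q + (q + q) = ENNReal.ofReal (4 * ((N:ℝ)^6)⁻¹) := by
            rw [hq, ENNReal.ofReal_mul (by norm_num : (0:ℝ) ≤ 4)]
            rw [show (ENNReal.ofReal 4) = 4 by
              rw [show (4:ℝ) = ((4:ℕ):ℝ) by norm_num, ENNReal.ofReal_natCast]; norm_num]
            ring
          rw [h4, show ((7 * N ^ 2 : ℕ) : ℝ≥0∞) = ENNReal.ofReal ((7 * N ^ 2 : ℕ):ℝ) by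
            rw [ENNReal.ofReal_natCast]]
          rw [← ENNReal.ofReal_mul (by positivity)]
          apply ENNReal.ofReal_le_ofReal
          have hc7 : ((7 * N ^ 2 : ℕ):ℝ) = 7 * (N:ℝ)^2 := by push_cast; ring
          have hNe : (N:ℝ) ≠ 0 := hNR.ne'
          rw [hc7]
          rw [show (7 * (N:ℝ)^2) * (4 * ((N:ℝ)^6)⁻¹) = 28 / (N:ℝ)^4 by
            field_simp; ring]
  -- truncated bad sets and Borel–Cantelli
  set sB : ℕ → Set Ω := fun N => if N < N₀ then (∅ : Set Ω) else Bad N with hsB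
  have hsum : (∑' N, P (sB N)) ≠ ⊤ := by
    have hle : ∀ N, P (sB N) ≤ ENNReal.ofReal (28 / (N:ℝ)^4) := by
      intro N
      by_cases h : N < N₀
      · rw [hsB]; simp [h]
      · rw [hsB]; simp only [if_neg h]
        exact hBadMeas N (not_lt.1 h)
    have hsummable : Summable (fun N : ℕ => 28 / (N:ℝ)^4) := by
      have h1 := (summable_one_div_nat_pow (p := 4)).2 (by norm_num)
      have h2 := h1.mul_left 28
      apply h2.congr
      intro n
      rw [mul_one_div]
    have hnn : ∀ N : ℕ, 0 ≤ 28 / (N:ℝ)^4 := fun N => by positivity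
    have hcalc : (∑' N, P (sB N)) ≤ ENNReal.ofReal (∑' N : ℕ, 28 / (N:ℝ)^4) := by
      calc (∑' N, P (sB N)) ≤ ∑' N : ℕ, ENNReal.ofReal (28 / (N:ℝ)^4) :=
            ENNReal.tsum_le_tsum hle
        _ = ENNReal.ofReal (∑' N : ℕ, 28 / (N:ℝ)^4) :=
            (ENNReal.ofReal_tsum_of_nonneg hnn hsummable).symm
    exact ne_top_of_le_ne_top ENNReal.ofReal_ne_top hcalc
  have hBC := MeasureTheory.ae_eventually_notMem (μ := P) (s := sB) hsum
  -- a.s. zero variables where σ vanishes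
  have hzero : ∀ᵐ ω ∂P, ∀ r : ↥R, σ (r:ℕ) = 0 → X (r:ℕ) ω = 0 := by
    rw [ae_all_iff]
    intro r
    by_cases h : σ (r:ℕ) = 0
    · have hnull : P {ω | ¬ X (r:ℕ) ω = 0} = 0 := by
        refine measure_mono_null (fun ω hω => ?_) (by rw [hdist r r.2, h]; simp)
        rcases hX01 r r.2 ω with h0 | h1
        · exact absurd h0 hω
        · exact h1
      have hae : ∀ᵐ ω ∂P, X (r:ℕ) ω = 0 := by
        rw [ae_iff]; exact hnull
      filter_upwards [hae] with ω hω _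
      exact hω
    · filter_upwards with ω hσz
      exact absurd hσz h
  -- main a.e. statement
  filter_upwards [hBC, hzero] with ω hω1 hω2
  obtain ⟨N₂, hN₂⟩ := Filter.eventually_atTop.1 hω1
  set N₃ : ℕ := max N₂ N₀ with hN₃def
  have hxi : ∀ N, ∀ r ∈ initSeg R N, |X r ω - σ r| ≤ 1 := by
    intro N r hr
    have hrR := (hmem N r hr).2.2
    rcases hX01 r hrR ω with h | h <;> rw [h, abs_le] <;>
      constructor <;> nlinarith [hσ0 r hrR, hσ1 r hrR]
  have htriv : ∀ N β, ‖∑ r ∈ initSeg R N, ((X r ω - σ r : ℝ) : ℂ) * eC ((r : ℝ) * β)‖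
      ≤ (N:ℝ) := by
    intro N β
    calc ‖∑ r ∈ initSeg R N, ((X r ω - σ r : ℝ) : ℂ) * eC ((r : ℝ) * β)‖
        ≤ ∑ r ∈ initSeg R N, ‖((X r ω - σ r : ℝ) : ℂ) * eC ((r : ℝ) * β)‖ :=
          norm_sum_le _ _
      _ ≤ ∑ _r ∈ initSeg R N, (1:ℝ) := by
          apply Finset.sum_le_sum
          intro r hr
          rw [norm_mul, eC_norm', mul_one, Complex.norm_real, Real.norm_eq_abs]
          exact hxi N r hr
      _ = ((initSeg R N).card : ℝ) := by simp
      _ ≤ (N:ℝ) := hcard N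
  -- large N bound
  have hlarge : ∀ N, N₃ ≤ N → ∀ β,
      ‖∑ r ∈ initSeg R N, ((X r ω - σ r : ℝ) : ℂ) * eC ((r : ℝ) * β)‖
        ≤ (2 * c + 2 / Real.sqrt b) * Real.sqrt (L N * V N) := by
    intro N hN β
    have hNN₀ : N₀ ≤ N := le_trans (le_max_right _ _) hN
    have hN3 : (3:ℕ) ≤ N := le_trans (le_max_right _ _) hNN₀
    obtain ⟨hL1, hbLV⟩ := hN₀facts N hNN₀
    have hnB : ω ∉ Bad N := by
      have h1 := hN₂ N (le_trans (le_max_left _ _) hN)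
      rw [hsB] at h1
      simpa [not_lt.2 hNN₀] using h1
    obtain ⟨j, hjM, hnet⟩ := net_approx' N (by omega) β
    set βj : ℝ := (j:ℝ) / ((7 * N ^ 2 : ℕ) : ℝ) with hβj
    rw [hBaddef] at hnB
    simp only [Set.mem_iUnion, not_exists, Set.mem_union, not_or, Finset.mem_range] at hnB
    have hnBj := hnB j hjM
    rw [hTaildef] at hnBj
    simp only [Set.mem_setOf_eq, not_le] at hnBj
    obtain ⟨⟨hc1', hc2'⟩, ⟨hs1', hs2'⟩⟩ := hnBj
    have hnegC : ∑ r ∈ initSeg R N, -(aC N j r) * (X r ω - σ r)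
        = -∑ r ∈ initSeg R N, aC N j r * (X r ω - σ r) := by
      rw [← Finset.sum_neg_distrib]
      exact Finset.sum_congr rfl fun r _ => by ring
    have hnegS : ∑ r ∈ initSeg R N, -(aS N j r) * (X r ω - σ r)
        = -∑ r ∈ initSeg R N, aS N j r * (X r ω - σ r) := by
      rw [← Finset.sum_neg_distrib]
      exact Finset.sum_congr rfl fun r _ => by ring
    have habsRe : |∑ r ∈ initSeg R N, aC N j r * (X r ω - σ r)| ≤ t N := by
      rw [hnegC] at hc2'
      rw [abs_le]
      constructor <;> linarith
    have habsIm : |∑ r ∈ initSeg R N, aS N j r * (X r ω - σ r)| ≤ t N := by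
      rw [hnegS] at hs2'
      rw [abs_le]
      constructor <;> linarith
    have hReT : (∑ r ∈ initSeg R N, ((X r ω - σ r : ℝ) : ℂ) * eC ((r : ℝ) * βj)).re
        = ∑ r ∈ initSeg R N, aC N j r * (X r ω - σ r) := by
      rw [Complex.re_sum]
      refine Finset.sum_congr rfl fun r _ => ?_
      rw [Complex.mul_re, Complex.ofReal_re, Complex.ofReal_im, eC_re', haC]
      ring
    have hImT : (∑ r ∈ initSeg R N, ((X r ω - σ r : ℝ) : ℂ) * eC ((r : ℝ) * βj)).im
        = ∑ r ∈ initSeg R N, aS N j r * (X r ω - σ r) := by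
      rw [Complex.im_sum]
      refine Finset.sum_congr rfl fun r _ => ?_
      rw [Complex.mul_im, Complex.ofReal_re, Complex.ofReal_im, eC_im', haS]
      ring
    have hTj : ‖∑ r ∈ initSeg R N, ((X r ω - σ r : ℝ) : ℂ) * eC ((r : ℝ) * βj)‖
        ≤ 2 * t N := by
      calc ‖∑ r ∈ initSeg R N, ((X r ω - σ r : ℝ) : ℂ) * eC ((r : ℝ) * βj)‖
          ≤ |(∑ r ∈ initSeg R N, ((X r ω - σ r : ℝ) : ℂ) * eC ((r : ℝ) * βj)).re|
            + |(∑ r ∈ initSeg R N, ((X r ω - σ r : ℝ) : ℂ) * eC ((r : ℝ) * βj)).im| := by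
            exact Complex.norm_le_abs_re_add_abs_im _
        _ ≤ t N + t N := by
            rw [hReT, hImT]
            exact add_le_add habsRe habsIm
        _ = 2 * t N := by ring
    have hNR : (0:ℝ) < (N:ℝ) := by exact_mod_cast (by omega : 0 < N)
    have hMcast : ((7 * N ^ 2 : ℕ) : ℝ) = 7 * (N:ℝ)^2 := by push_cast; ring
    have hMpos : (0:ℝ) < ((7 * N ^ 2 : ℕ) : ℝ) := by rw [hMcast]; positivity
    have hdiff : ‖∑ r ∈ initSeg R N, ((X r ω - σ r : ℝ) : ℂ) * eC ((r : ℝ) * β)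
        - ∑ r ∈ initSeg R N, ((X r ω - σ r : ℝ) : ℂ) * eC ((r : ℝ) * βj)‖ ≤ 2 := by
      rw [← Finset.sum_sub_distrib]
      calc ‖∑ r ∈ initSeg R N, (((X r ω - σ r : ℝ) : ℂ) * eC ((r : ℝ) * β)
              - ((X r ω - σ r : ℝ) : ℂ) * eC ((r : ℝ) * βj))‖
          ≤ ∑ r ∈ initSeg R N, ‖((X r ω - σ r : ℝ) : ℂ) * eC ((r : ℝ) * β)
              - ((X r ω - σ r : ℝ) : ℂ) * eC ((r : ℝ) * βj)‖ := norm_sum_le _ _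
        _ ≤ ∑ _r ∈ initSeg R N, 4 * Real.pi * (N:ℝ) / ((7 * N ^ 2 : ℕ) : ℝ) := by
            apply Finset.sum_le_sum
            intro r hr
            obtain ⟨hr1, hrN, _⟩ := hmem N r hr
            rw [← mul_sub, norm_mul, Complex.norm_real, Real.norm_eq_abs]
            have h1 := hnet r hr1 hrN
            have hrNR : (r:ℝ) ≤ (N:ℝ) := by exact_mod_cast hrN
            have h2 : ‖eC ((r:ℝ) * β) - eC ((r:ℝ) * βj)‖
                ≤ 4 * Real.pi * (N:ℝ) / ((7 * N ^ 2 : ℕ) : ℝ) := by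
              refine h1.trans ?_
              gcongr
            calc |X r ω - σ r| * ‖eC ((r:ℝ) * β) - eC ((r:ℝ) * βj)‖
                ≤ 1 * (4 * Real.pi * (N:ℝ) / ((7 * N ^ 2 : ℕ) : ℝ)) :=
                  mul_le_mul (hxi N r hr) h2 (norm_nonneg _) zero_le_one
              _ = 4 * Real.pi * (N:ℝ) / ((7 * N ^ 2 : ℕ) : ℝ) := one_mul _
        _ = ((initSeg R N).card : ℝ) * (4 * Real.pi * (N:ℝ) / ((7 * N ^ 2 : ℕ) : ℝ)) := by
            rw [Finset.sum_const, nsmul_eq_mul]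
        _ ≤ (N:ℝ) * (4 * Real.pi * (N:ℝ) / ((7 * N ^ 2 : ℕ) : ℝ)) := by
            apply mul_le_mul_of_nonneg_right (hcard N) (by positivity)
        _ = 4 * Real.pi / 7 := by
            rw [hMcast]
            have hNe : (N:ℝ) ≠ 0 := hNR.ne'
            field_simp
        _ ≤ 2 := by nlinarith [Real.pi_lt_d2]
    have hsqrtb : Real.sqrt b ≤ Real.sqrt (L N * V N) := by
      apply Real.sqrt_le_sqrt
      nlinarith [hV0 N]
    have hsb0 : (0:ℝ) < Real.sqrt b := Real.sqrt_pos.2 hb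
    have h2le : (2:ℝ) ≤ (2 / Real.sqrt b) * Real.sqrt (L N * V N) := by
      rw [div_mul_eq_mul_div, le_div_iff₀ hsb0]
      nlinarith
    calc ‖∑ r ∈ initSeg R N, ((X r ω - σ r : ℝ) : ℂ) * eC ((r : ℝ) * β)‖
        ≤ ‖∑ r ∈ initSeg R N, ((X r ω - σ r : ℝ) : ℂ) * eC ((r : ℝ) * βj)‖
          + ‖∑ r ∈ initSeg R N, ((X r ω - σ r : ℝ) : ℂ) * eC ((r : ℝ) * β)
            - ∑ r ∈ initSeg R N, ((X r ω - σ r : ℝ) : ℂ) * eC ((r : ℝ) * βj)‖ := by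
          exact norm_le_insert' _ _
      _ ≤ 2 * t N + 2 := add_le_add hTj hdiff
      _ ≤ 2 * (c * Real.sqrt (L N * V N)) + (2 / Real.sqrt b) * Real.sqrt (L N * V N) := by
          rw [htdef]
          exact add_le_add (le_refl _) h2le
      _ = (2 * c + 2 / Real.sqrt b) * Real.sqrt (L N * V N) := by ring
  -- assemble the constant
  set C₀ : ℝ := 2 * c + 2 / Real.sqrt b with hC₀
  set Cfin : ℝ := ∑ N ∈ Finset.range N₃,
    (if 0 < V N then (N:ℝ) / Real.sqrt (L N * V N) else 0) with hCfin
  have hterm_nonneg : ∀ N ∈ Finset.range N₃,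
      (0:ℝ) ≤ (if 0 < V N then (N:ℝ) / Real.sqrt (L N * V N) else 0) := by
    intro N _
    split
    · positivity
    · exact le_refl 0
  have hCfin0 : 0 ≤ Cfin := Finset.sum_nonneg hterm_nonneg
  have hC₀0 : 0 ≤ C₀ := by
    rw [hC₀]
    have : (0:ℝ) ≤ 2 / Real.sqrt b := by positivity
    nlinarith
  refine ⟨C₀ + Cfin, ?_⟩
  intro N hN2 β
  have hLV : Real.log N * wSum R σ N = L N * V N := rfl
  rw [hLV]
  rcases le_or_gt N₃ N with hbig | hsmall
  · calc ‖∑ r ∈ initSeg R N, ((X r ω - σ r : ℝ) : ℂ) * eC ((r : ℝ) * β)‖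
        ≤ C₀ * Real.sqrt (L N * V N) := hlarge N hbig β
      _ ≤ (C₀ + Cfin) * Real.sqrt (L N * V N) := by
          apply mul_le_mul_of_nonneg_right (by linarith) (Real.sqrt_nonneg _)
  · rcases (hV0 N).eq_or_lt with hVz | hVpos
    · -- V N = 0 : the sum is identically 0
      have hσz : ∀ r ∈ initSeg R N, σ r = 0 := by
        intro r hr
        have := (Finset.sum_eq_zero_iff_of_nonneg
          (fun r hr => hσ0 r (hmem N r hr).2.2)).1 hVz.symm
        exact this r hr
      have hTzero : ∑ r ∈ initSeg R N, ((X r ω - σ r : ℝ) : ℂ) * eC ((r : ℝ) * β) = 0 := by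
        apply Finset.sum_eq_zero
        intro r hr
        have h1 : σ r = 0 := hσz r hr
        have h2 : X r ω = 0 := hω2 ⟨r, (hmem N r hr).2.2⟩ h1
        rw [h1, h2]
        simp
      rw [hTzero, ← hVz]
      simp [norm_zero]
    · -- V N > 0, small N: use the trivial bound
      have hN1R : (1:ℝ) < (N:ℝ) := by exact_mod_cast (by omega : 1 < N)
      have hLpos : 0 < L N := Real.log_pos hN1R
      have hsq : 0 < Real.sqrt (L N * V N) := Real.sqrt_pos.2 (by positivity)
      have hle1 : (if 0 < V N then (N:ℝ) / Real.sqrt (L N * V N) else 0) ≤ Cfin := by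
        rw [hCfin]
        exact Finset.single_le_sum hterm_nonneg (Finset.mem_range.2 hsmall)
      rw [if_pos hVpos] at hle1
      calc ‖∑ r ∈ initSeg R N, ((X r ω - σ r : ℝ) : ℂ) * eC ((r : ℝ) * β)‖
          ≤ (N:ℝ) := htriv N β
        _ = ((N:ℝ) / Real.sqrt (L N * V N)) * Real.sqrt (L N * V N) := by
            rw [div_mul_cancel₀ _ hsq.ne']
        _ ≤ (C₀ + Cfin) * Real.sqrt (L N * V N) :=
            mul_le_mul_of_nonneg_right (le_trans hle1 (le_add_of_nonneg_left hC₀0))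
              (Real.sqrt_nonneg _)
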